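/- In the formal power series ring F[[t]] the following identity holds: ∑_{a=1}^∞ ω_{−a}·t^a = t²·(1 − t²)^{-1} + δ^{-1}·ϱ − P^{-1}·(δ^{-1}·ϱ·P − h(t))·∏_{l=1}^r (1 − u_l·t)·(1 − u_l^{-1}·t)^{-1}, where P := u_1⋯u_r and h(t) := t·(1 − t²)^{-1} if r is odd, h(t) := −t²·(1 − t²)^{-1} if r is even. (This is the formula for the generating series w̃_{1,−}(y) = ∑_{a≥1} ω_{−a} y^{-a} after substituting y = t^{-1}.) -/

import Mathlib

open Finset

open Finset

lemma aux_geom {F : Type*} [Field F] (c : F) :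
    (PowerSeries.mk fun n => c ^ n) * (1 - PowerSeries.C c * PowerSeries.X) = 1 := by
  ext n
  rw [mul_sub, mul_one, mul_left_comm]
  cases n with
  | zero => simp
  | succ n =>
      simp [PowerSeries.coeff_C_mul, PowerSeries.coeff_succ_mul_X, PowerSeries.coeff_mk,
        pow_succ, mul_comm]

lemma aux_mul_dvd {R : Type*} [CommRing R] [IsDomain R] {p q n : R}
    (hp : Prime p) (hq : Prime q) (hpq : ¬ p ∣ q) (h1 : p ∣ n) (h2 : q ∣ n) : p * q ∣ n := by
  obtain ⟨a, rfl⟩ := h1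
  rcases (hq.2.2 p a h2) with h | h
  · exact absurd ((hq.associated_of_dvd hp h).symm.dvd) hpq
  · obtain ⟨b, rfl⟩ := h
    exact ⟨b, by ring⟩

lemma aux_dvd_univ (r : ℕ) :
    (1 - Polynomial.X ^ 2 : Polynomial (MvPolynomial (Fin r) ℤ)) ∣
      (if Odd r then
          Polynomial.X * ∏ l, (1 - Polynomial.C (MvPolynomial.X l) * Polynomial.X) +
            ∏ l, (Polynomial.C (MvPolynomial.X l) - Polynomial.X)
        else
          ∏ l, (1 - Polynomial.C (MvPolynomial.X l) * Polynomial.X) -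
            ∏ l, (Polynomial.C (MvPolynomial.X l) - Polynomial.X)) := by
  set R := MvPolynomial (Fin r) ℤ
  set n := (if Odd r then
          Polynomial.X * ∏ l, (1 - Polynomial.C (MvPolynomial.X l) * Polynomial.X) +
            ∏ l, (Polynomial.C (MvPolynomial.X l) - Polynomial.X)
        else
          ∏ l, (1 - Polynomial.C (MvPolynomial.X l) * Polynomial.X) -
            ∏ l, (Polynomial.C (MvPolynomial.X l) - Polynomial.X) : Polynomial R) with hn
  have hprod : ∀ x : R, (∏ l : Fin r, (MvPolynomial.X l - x) : R)
      = (-1) ^ r * ∏ l : Fin r, (x - MvPolynomial.X l) := by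
    intro x
    calc (∏ l : Fin r, (MvPolynomial.X l - x) : R)
        = ∏ l : Fin r, ((-1) * (x - MvPolynomial.X l)) :=
          Finset.prod_congr rfl fun l _ => by ring
      _ = (∏ _l : Fin r, (-1 : R)) * ∏ l : Fin r, (x - MvPolynomial.X l) :=
          Finset.prod_mul_distrib
      _ = (-1) ^ r * ∏ l : Fin r, (x - MvPolynomial.X l) := by
          rw [Finset.prod_const]; simp
  have h1 : Polynomial.eval 1 (∏ l : Fin r, (1 - Polynomial.C (MvPolynomial.X l) * Polynomial.X) : Polynomial R)
      = ∏ l : Fin r, (1 - MvPolynomial.X l) := by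
    rw [Polynomial.eval_prod]; exact Finset.prod_congr rfl fun l _ => by simp
  have h2 : Polynomial.eval 1 (∏ l : Fin r, (Polynomial.C (MvPolynomial.X l) - Polynomial.X) : Polynomial R)
      = ∏ l : Fin r, (MvPolynomial.X l - 1) := by
    rw [Polynomial.eval_prod]; exact Finset.prod_congr rfl fun l _ => by simp
  have h3 : Polynomial.eval (-1) (∏ l : Fin r, (1 - Polynomial.C (MvPolynomial.X l) * Polynomial.X) : Polynomial R)
      = ∏ l : Fin r, (1 + MvPolynomial.X l) := by
    rw [Polynomial.eval_prod]
    exact Finset.prod_congr rfl fun l _ => by simp [sub_eq_add_neg]; ring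
  have h4 : Polynomial.eval (-1) (∏ l : Fin r, (Polynomial.C (MvPolynomial.X l) - Polynomial.X) : Polynomial R)
      = ∏ l : Fin r, (1 + MvPolynomial.X l) := by
    rw [Polynomial.eval_prod]
    exact Finset.prod_congr rfl fun l _ => by simp [add_comm]
  have heval1 : Polynomial.eval 1 n = 0 := by
    rcases Nat.even_or_odd r with hre | hro
    · rw [hn, if_neg (Nat.not_odd_iff_even.mpr hre)]
      simp only [Polynomial.eval_sub, h1, h2, hprod 1, hre.neg_one_pow]
      ring
    · rw [hn, if_pos hro]
      simp only [Polynomial.eval_add, Polynomial.eval_mul, Polynomial.eval_X, h1, h2,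
        hprod 1, hro.neg_one_pow]
      ring
  have hevalm1 : Polynomial.eval (-1) n = 0 := by
    rcases Nat.even_or_odd r with hre | hro
    · rw [hn, if_neg (Nat.not_odd_iff_even.mpr hre)]
      simp only [Polynomial.eval_sub, h3, h4]
      ring
    · rw [hn, if_pos hro]
      simp only [Polynomial.eval_add, Polynomial.eval_mul, Polynomial.eval_X, h3, h4]
      ring
  have hp : Prime (Polynomial.X - Polynomial.C (1 : R)) := Polynomial.prime_X_sub_C 1
  have hq : Prime (Polynomial.X - Polynomial.C (-1 : R)) := Polynomial.prime_X_sub_C (-1)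
  have hpq : ¬ (Polynomial.X - Polynomial.C (1 : R)) ∣ (Polynomial.X - Polynomial.C (-1 : R)) := by
    intro h
    have := Polynomial.dvd_iff_isRoot.mp h
    simp only [Polynomial.IsRoot, Polynomial.eval_sub, Polynomial.eval_X, Polynomial.eval_C,
      sub_neg_eq_add] at this
    norm_num at this
  have hd : (Polynomial.X - Polynomial.C (1 : R)) * (Polynomial.X - Polynomial.C (-1 : R)) ∣ n :=
    aux_mul_dvd hp hq hpq (Polynomial.dvd_iff_isRoot.mpr heval1)
      (Polynomial.dvd_iff_isRoot.mpr hevalm1)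
  have heq : (Polynomial.X - Polynomial.C (1 : R)) * (Polynomial.X - Polynomial.C (-1 : R))
      = -(1 - Polynomial.X ^ 2) := by
    simp only [map_one, map_neg]
    ring
  rw [heq] at hd
  exact (neg_dvd.mp hd)

lemma aux_dvd {F : Type*} [Field F] {r : ℕ} (v : Fin r → F) :
    (1 - Polynomial.X ^ 2 : Polynomial F) ∣
      (if Odd r then
          Polynomial.X * ∏ l, (1 - Polynomial.C (v l) * Polynomial.X) +
            ∏ l, (Polynomial.C (v l) - Polynomial.X)
        else
          ∏ l, (1 - Polynomial.C (v l) * Polynomial.X) -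
            ∏ l, (Polynomial.C (v l) - Polynomial.X)) := by
  have h := aux_dvd_univ r
  let φ : MvPolynomial (Fin r) ℤ →+* F := MvPolynomial.eval₂Hom (Int.castRingHom F) v
  let Φ : Polynomial (MvPolynomial (Fin r) ℤ) →+* Polynomial F := Polynomial.mapRingHom φ
  have h2 := map_dvd Φ h
  have e1 : Φ (1 - Polynomial.X ^ 2) = 1 - Polynomial.X ^ 2 := by
    simp [Φ]
  have e2 : ∀ l : Fin r, Polynomial.map φ (1 - Polynomial.C (MvPolynomial.X l) * Polynomial.X)
      = 1 - Polynomial.C (v l) * Polynomial.X := by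
    intro l; simp [φ]
  have e3 : ∀ l : Fin r, Polynomial.map φ (Polynomial.C (MvPolynomial.X l) - Polynomial.X)
      = Polynomial.C (v l) - Polynomial.X := by
    intro l; simp [φ]
  rw [e1] at h2
  rcases Nat.even_or_odd r with hre | hro
  · rw [if_neg (Nat.not_odd_iff_even.mpr hre)] at h2 ⊢
    rw [map_sub, map_prod, map_prod] at h2
    simp only [Φ, Polynomial.coe_mapRingHom] at h2
    rwa [Finset.prod_congr rfl (fun l _ => e2 l), Finset.prod_congr rfl (fun l _ => e3 l)] at h2
  · rw [if_pos hro] at h2 ⊢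
    rw [map_add, map_mul, map_prod, map_prod] at h2
    simp only [Φ, Polynomial.coe_mapRingHom, Polynomial.map_X] at h2
    rwa [Finset.prod_congr rfl (fun l _ => e2 l), Finset.prod_congr rfl (fun l _ => e3 l)] at h2

lemma aux_key {F : Type*} [Field F] {r : ℕ} (e : F) (u : Fin r → F)
    (hu0 : ∀ i, u i ≠ 0) (huinj : Function.Injective u) (hu1 : ∀ i j, u i * u j ≠ 1)
    (γ : Fin r → F)
    (hγ : ∀ i, γ i =
      ((if Odd r then 1 else -u i) + e * (u i ^ 2 - 1) * ∏ j ∈ Finset.univ.erase i, u j) *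
        ∏ j ∈ Finset.univ.erase i, (u i * u j - 1) / (u i - u j)) :
    (1 - Polynomial.X ^ 2) *
        ((∑ j, Polynomial.C (γ j) *
            ∏ l ∈ Finset.univ.erase j, (1 - Polynomial.C (u l)⁻¹ * Polynomial.X)) -
          Polynomial.C (∑ j, γ j) * ∏ l, (1 - Polynomial.C (u l)⁻¹ * Polynomial.X))
      = Polynomial.X ^ 2 * ∏ l, (1 - Polynomial.C (u l)⁻¹ * Polynomial.X)
        + Polynomial.C e * (1 - Polynomial.X ^ 2) * ∏ l, (1 - Polynomial.C (u l)⁻¹ * Polynomial.X)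
        - Polynomial.C e * (1 - Polynomial.X ^ 2) * ∏ l, (1 - Polynomial.C (u l) * Polynomial.X)
        + (if Odd r then Polynomial.X * ∏ l, (Polynomial.C (u l)⁻¹ - Polynomial.X)
            else -(Polynomial.X ^ 2 * ∏ l, (Polynomial.C (u l)⁻¹ - Polynomial.X))) := by
  classical
  obtain ⟨W, hW⟩ := aux_dvd (F := F) (fun l => (u l)⁻¹)
  have hX2ne : (1 - Polynomial.X ^ 2 : Polynomial F) ≠ 0 := fun h => by
    simpa using congrArg (Polynomial.eval (0 : F)) h
  have hX2deg : (1 - Polynomial.X ^ 2 : Polynomial F).natDegree = 2 := by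
    compute_degree!
  -- the key identity with degree r
  have key : (∑ j, Polynomial.C (γ j) *
            ∏ l ∈ Finset.univ.erase j, (1 - Polynomial.C (u l)⁻¹ * Polynomial.X)) -
          Polynomial.C (∑ j, γ j) * ∏ l, (1 - Polynomial.C (u l)⁻¹ * Polynomial.X)
        - (Polynomial.C e * ∏ l, (1 - Polynomial.C (u l)⁻¹ * Polynomial.X)
          - Polynomial.C e * ∏ l, (1 - Polynomial.C (u l) * Polynomial.X)
          + (if Odd r then Polynomial.X else Polynomial.X ^ 2) * W) = 0 := by
    have h0 : (0 : F) ∉ Finset.image u Finset.univ := by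
      simp only [Finset.mem_image, Finset.mem_univ, true_and, not_exists]
      exact fun i h => hu0 i h
    have hcard : (insert (0 : F) (Finset.image u Finset.univ)).card = r + 1 := by
      rw [Finset.card_insert_of_notMem h0, Finset.card_image_of_injective _ huinj,
        Finset.card_univ, Fintype.card_fin]
    -- degree bounds
    have hdprod : ∀ (t : Finset (Fin r)) (p : Fin r → Polynomial F),
        (∀ l ∈ t, (p l).natDegree ≤ 1) → (∏ l ∈ t, p l).natDegree ≤ t.card := by
      intro t p h
      refine le_trans (Polynomial.natDegree_prod_le t p) ?_
      calc ∑ l ∈ t, (p l).natDegree ≤ t.card • 1 := Finset.sum_le_card_nsmul t _ 1 h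
        _ = t.card := by simp
    have hd1 : ∀ c : F, (1 - Polynomial.C c * Polynomial.X : Polynomial F).natDegree ≤ 1 := by
      intro c; compute_degree
    have hd2 : ∀ c : F, (Polynomial.C c - Polynomial.X : Polynomial F).natDegree ≤ 1 := by
      intro c; compute_degree
    have hdf : (∏ l, (1 - Polynomial.C (u l)⁻¹ * Polynomial.X) : Polynomial F).natDegree ≤ r := by
      refine le_trans (hdprod _ _ fun l _ => hd1 _) ?_
      simp
    have hdm : (∏ l, (1 - Polynomial.C (u l) * Polynomial.X) : Polynomial F).natDegree ≤ r := by
      refine le_trans (hdprod _ _ fun l _ => hd1 _) ?_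
      simp
    have hdg : (∏ l, (Polynomial.C (u l)⁻¹ - Polynomial.X) : Polynomial F).natDegree ≤ r := by
      refine le_trans (hdprod _ _ fun l _ => hd2 _) ?_
      simp
    have hdW : ((if Odd r then Polynomial.X else Polynomial.X ^ 2) * W).natDegree ≤ r := by
      by_cases hW0 : W = 0
      · simp [hW0]
      · rcases Nat.even_or_odd r with hre | hro
        · rw [if_neg (Nat.not_odd_iff_even.mpr hre)] at hW ⊢
          have hdV : ((1 - Polynomial.X ^ 2) * W).natDegree ≤ r := by
            rw [← hW]
            exact le_trans (Polynomial.natDegree_sub_le _ _) (by simp [hdf, hdg])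
          rw [Polynomial.natDegree_mul hX2ne hW0, hX2deg] at hdV
          refine le_trans Polynomial.natDegree_mul_le ?_
          have : (Polynomial.X ^ 2 : Polynomial F).natDegree = 2 := by compute_degree!
          omega
        · rw [if_pos hro] at hW ⊢
          have hdV : ((1 - Polynomial.X ^ 2) * W).natDegree ≤ r + 1 := by
            rw [← hW]
            refine le_trans (Polynomial.natDegree_add_le _ _) ?_
            have hXf : (Polynomial.X * ∏ l, (1 - Polynomial.C (u l)⁻¹ * Polynomial.X) : Polynomial F).natDegree ≤ r + 1 := by
              refine le_trans Polynomial.natDegree_mul_le ?_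
              simp only [Polynomial.natDegree_X]
              omega
            simp only [max_le_iff]
            exact ⟨hXf, le_trans hdg (by omega)⟩
          rw [Polynomial.natDegree_mul hX2ne hW0, hX2deg] at hdV
          refine le_trans Polynomial.natDegree_mul_le ?_
          simp only [Polynomial.natDegree_X]
          omega
    apply Polynomial.eq_zero_of_natDegree_lt_card_of_eval_eq_zero' _
      (insert (0 : F) (Finset.image u Finset.univ))
    · intro x hx
      rcases Finset.mem_insert.mp hx with rfl | hx
      · -- evaluation at 0
        simp [Polynomial.eval_finset_sum, Polynomial.eval_prod, apply_ite (Polynomial.eval (0 : F))]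
      · obtain ⟨j, -, rfl⟩ := Finset.mem_image.mp hx
        have hx2 : (1 : F) - u j ^ 2 ≠ 0 := fun h => hu1 j j (by linear_combination -h)
        set s := Finset.univ.erase j with hs
        set PI := ∏ l ∈ s, u l with hPIdef
        set AJ := ∏ l ∈ s, (u j * u l - 1) with hAJdef
        set LJ := ∏ l ∈ s, (u l - u j) with hLJdef
        set σ := (-1 : F) ^ (r - 1) with hσdef
        have hscard : s.card = r - 1 := by
          rw [hs, Finset.card_erase_of_mem (Finset.mem_univ j), Finset.card_univ,
            Fintype.card_fin]
        have hsign : ∀ w : Fin r → F, (∏ l ∈ s, (-(w l))) = σ * ∏ l ∈ s, w l := by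
          intro w
          calc (∏ l ∈ s, (-(w l))) = ∏ l ∈ s, ((-1) * w l) := by
                exact Finset.prod_congr rfl fun l _ => by ring
            _ = (∏ _l ∈ s, (-1 : F)) * ∏ l ∈ s, w l := Finset.prod_mul_distrib
            _ = σ * ∏ l ∈ s, w l := by rw [Finset.prod_const, hscard]
        have hPI0 : PI ≠ 0 := Finset.prod_ne_zero_iff.mpr fun l _ => hu0 l
        have hLJ0 : LJ ≠ 0 := Finset.prod_ne_zero_iff.mpr fun l hl =>
          sub_ne_zero.mpr fun hh => (Finset.mem_erase.mp hl).1 (huinj hh)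
        have hσ0 : σ ≠ 0 := pow_ne_zero _ (by norm_num)
        -- evaluation facts
        have hF : Polynomial.eval (u j)
            (∏ l, (1 - Polynomial.C (u l)⁻¹ * Polynomial.X) : Polynomial F) = 0 := by
          rw [Polynomial.eval_prod]
          exact Finset.prod_eq_zero (Finset.mem_univ j) (by simp [inv_mul_cancel₀ (hu0 j)])
        have hT1 : Polynomial.eval (u j) (∑ i, Polynomial.C (γ i) *
              ∏ l ∈ Finset.univ.erase i, (1 - Polynomial.C (u l)⁻¹ * Polynomial.X)) =
            γ j * Polynomial.eval (u j)
              (∏ l ∈ s, (1 - Polynomial.C (u l)⁻¹ * Polynomial.X)) := by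
          rw [Polynomial.eval_finset_sum, Finset.sum_eq_single j]
          · simp [hs]
          · intro i _ hij
            have hji : j ∈ Finset.univ.erase i :=
              Finset.mem_erase.mpr ⟨Ne.symm hij, Finset.mem_univ j⟩
            rw [Polynomial.eval_mul, Polynomial.eval_prod,
              Finset.prod_eq_zero hji (by simp [inv_mul_cancel₀ (hu0 j)]), mul_zero]
          · intro h; exact absurd (Finset.mem_univ j) h
        have hEj : Polynomial.eval (u j)
            (∏ l ∈ s, (1 - Polynomial.C (u l)⁻¹ * Polynomial.X)) = PI⁻¹ * LJ := by
          rw [Polynomial.eval_prod]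
          calc (∏ l ∈ s, Polynomial.eval (u j) (1 - Polynomial.C (u l)⁻¹ * Polynomial.X))
              = ∏ l ∈ s, ((u l)⁻¹ * (u l - u j)) := Finset.prod_congr rfl fun l _ => by
                simp only [Polynomial.eval_sub, Polynomial.eval_one, Polynomial.eval_mul,
                  Polynomial.eval_C, Polynomial.eval_X]
                rw [mul_sub, inv_mul_cancel₀ (hu0 l)]
            _ = (∏ l ∈ s, (u l)⁻¹) * LJ := Finset.prod_mul_distrib
            _ = PI⁻¹ * LJ := by rw [Finset.prod_inv_distrib]
        have hM : Polynomial.eval (u j)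
            (∏ l, (1 - Polynomial.C (u l) * Polynomial.X) : Polynomial F) =
            (1 - u j ^ 2) * (σ * AJ) := by
          rw [Polynomial.eval_prod, ← Finset.mul_prod_erase _ _ (Finset.mem_univ j), ← hs]
          have h2 : (∏ l ∈ s, Polynomial.eval (u j) (1 - Polynomial.C (u l) * Polynomial.X))
              = σ * AJ := by
            calc (∏ l ∈ s, Polynomial.eval (u j) (1 - Polynomial.C (u l) * Polynomial.X))
                = ∏ l ∈ s, (-(u j * u l - 1)) := Finset.prod_congr rfl fun l _ => by
                  simp only [Polynomial.eval_sub, Polynomial.eval_one, Polynomial.eval_mul,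
                    Polynomial.eval_C, Polynomial.eval_X]
                  ring
              _ = σ * AJ := hsign _
          rw [h2]
          simp only [Polynomial.eval_sub, Polynomial.eval_one, Polynomial.eval_mul,
            Polynomial.eval_C, Polynomial.eval_X]
          ring
        have hG : Polynomial.eval (u j)
            (∏ l, (Polynomial.C (u l)⁻¹ - Polynomial.X) : Polynomial F) =
            ((u j)⁻¹ - u j) * (PI⁻¹ * (σ * AJ)) := by
          rw [Polynomial.eval_prod, ← Finset.mul_prod_erase _ _ (Finset.mem_univ j), ← hs]
          have h2 : (∏ l ∈ s, Polynomial.eval (u j) (Polynomial.C (u l)⁻¹ - Polynomial.X))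
              = PI⁻¹ * (σ * AJ) := by
            calc (∏ l ∈ s, Polynomial.eval (u j) (Polynomial.C (u l)⁻¹ - Polynomial.X))
                = ∏ l ∈ s, ((u l)⁻¹ * (-(u j * u l - 1))) := Finset.prod_congr rfl fun l hl => by
                  simp only [Polynomial.eval_sub, Polynomial.eval_C, Polynomial.eval_X]
                  rw [neg_sub, mul_sub, mul_one,
                    show (u l)⁻¹ * (u j * u l) = (u l)⁻¹ * u l * u j by ring,
                    inv_mul_cancel₀ (hu0 l), one_mul]
              _ = (∏ l ∈ s, (u l)⁻¹) * ∏ l ∈ s, (-(u j * u l - 1)) := Finset.prod_mul_distrib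
              _ = PI⁻¹ * (σ * AJ) := by rw [Finset.prod_inv_distrib, hsign]
          rw [h2]
          simp only [Polynomial.eval_sub, Polynomial.eval_C, Polynomial.eval_X]
        have hσLJ0 : σ * LJ ≠ 0 := mul_ne_zero hσ0 hLJ0
        have hγval : γ j = (((if Odd r then 1 else -u j) + e * (u j ^ 2 - 1) * PI) * AJ) /
            (σ * LJ) := by
          rw [eq_div_iff hσLJ0, hγ j, Finset.prod_div_distrib]
          have hDJ : (∏ l ∈ s, (u j - u l)) = σ * LJ := by
            calc (∏ l ∈ s, (u j - u l)) = ∏ l ∈ s, (-(u l - u j)) :=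
                Finset.prod_congr rfl fun l _ => by ring
              _ = σ * LJ := hsign _
          rw [← hs, ← hPIdef, ← hAJdef, hDJ]
          field_simp
        have hWv : Polynomial.eval (u j) W =
            (if Odd r then ((u j)⁻¹ - u j) * (PI⁻¹ * (σ * AJ))
              else -(((u j)⁻¹ - u j) * (PI⁻¹ * (σ * AJ)))) / (1 - u j ^ 2) := by
          rw [eq_div_iff hx2]
          rcases Nat.even_or_odd r with hre | hro
          · rw [if_neg (Nat.not_odd_iff_even.mpr hre)] at hW ⊢
            have h3 := congrArg (Polynomial.eval (u j)) hW
            simp only [Polynomial.eval_sub, Polynomial.eval_mul, Polynomial.eval_pow,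
              Polynomial.eval_X, Polynomial.eval_one] at h3
            rw [hF, hG] at h3
            linear_combination -h3
          · rw [if_pos hro] at hW ⊢
            have h3 := congrArg (Polynomial.eval (u j)) hW
            simp only [Polynomial.eval_add, Polynomial.eval_sub, Polynomial.eval_mul,
              Polynomial.eval_pow, Polynomial.eval_X, Polynomial.eval_one] at h3
            rw [hF, hG] at h3
            linear_combination -h3
        -- final scalar computation
        suffices hsuff : (1 - u j ^ 2) * Polynomial.eval (u j) (
            (∑ i, Polynomial.C (γ i) *
              ∏ l ∈ Finset.univ.erase i, (1 - Polynomial.C (u l)⁻¹ * Polynomial.X)) -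
            Polynomial.C (∑ i, γ i) * ∏ l, (1 - Polynomial.C (u l)⁻¹ * Polynomial.X)
            - (Polynomial.C e * ∏ l, (1 - Polynomial.C (u l)⁻¹ * Polynomial.X)
              - Polynomial.C e * ∏ l, (1 - Polynomial.C (u l) * Polynomial.X)
              + (if Odd r then Polynomial.X else Polynomial.X ^ 2) * W)) = 0 by
          rcases mul_eq_zero.mp hsuff with h | h
          · exact absurd h hx2
          · exact h
        simp only [Polynomial.eval_sub, Polynomial.eval_add, Polynomial.eval_mul,
          Polynomial.eval_C, apply_ite (Polynomial.eval (u j)), Polynomial.eval_pow,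
          Polynomial.eval_X]
        rw [hT1, hEj, hF, hM, hγval, hWv]
        have hr1 : 1 ≤ r := j.pos
        rcases Nat.even_or_odd r with hre | hro
        · have hσeq : σ = -1 := by
            rw [hσdef, (Nat.Even.sub_odd hr1 hre odd_one).neg_one_pow]
          rw [if_neg (Nat.not_odd_iff_even.mpr hre), if_neg (Nat.not_odd_iff_even.mpr hre),
            if_neg (Nat.not_odd_iff_even.mpr hre), hσeq]
          field_simp [hu0 j]
          ring
        · have hσeq : σ = 1 := by
            rw [hσdef, (Nat.Odd.sub_odd hro odd_one).neg_one_pow]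
          rw [if_pos hro, if_pos hro, if_pos hro, hσeq]
          field_simp [hu0 j]
          ring
    · rw [hcard]
      refine Nat.lt_succ_of_le ?_
      refine le_trans (Polynomial.natDegree_sub_le _ _) ?_
      simp only [max_le_iff]
      constructor
      · refine le_trans (Polynomial.natDegree_sub_le _ _) ?_
        simp only [max_le_iff]
        constructor
        · refine Polynomial.natDegree_sum_le_of_forall_le _ _ fun i _ => ?_
          refine le_trans (Polynomial.natDegree_C_mul_le _ _) ?_
          refine le_trans (hdprod _ _ fun l _ => hd1 _) ?_
          rw [Finset.card_erase_of_mem (Finset.mem_univ i), Finset.card_univ,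
            Fintype.card_fin]
          omega
        · exact le_trans (Polynomial.natDegree_C_mul_le _ _) hdf
      · refine le_trans (Polynomial.natDegree_add_le _ _) ?_
        simp only [max_le_iff]
        refine ⟨le_trans (Polynomial.natDegree_sub_le _ _) ?_, hdW⟩
        simp only [max_le_iff]
        exact ⟨le_trans (Polynomial.natDegree_C_mul_le _ _) hdf,
          le_trans (Polynomial.natDegree_C_mul_le _ _) hdm⟩
  -- derive the statement from `key`
  rcases Nat.even_or_odd r with hre | hro
  · rw [if_neg (Nat.not_odd_iff_even.mpr hre)] at hW ⊢
    rw [if_neg (Nat.not_odd_iff_even.mpr hre)] at key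
    linear_combination (1 - Polynomial.X ^ 2 : Polynomial F) * key
      - (Polynomial.X ^ 2 : Polynomial F) * hW
  · rw [if_pos hro] at hW ⊢
    rw [if_pos hro] at key
    linear_combination (1 - Polynomial.X ^ 2 : Polynomial F) * key
      - (Polynomial.X : Polynomial F) * hW




/-- In `F[[t]]`:
`∑_{a≥1} ω_{−a} t^a = t²(1 − t²)⁻¹ + δ⁻¹ϱ − P⁻¹(δ⁻¹ϱP − h(t))·∏_l (1 − u_l t)(1 − u_l⁻¹t)⁻¹`,
with `P = u₁⋯u_r` and `h(t) = t(1 − t²)⁻¹` if `r` is odd, `h(t) = −t²(1 − t²)⁻¹` if `r` is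
even.  (The generating series `w̃₁₋(y) = ∑_{a≥1} ω_{−a} y^{−a}` with `y = t⁻¹`.) -/
theorem stmt_8 {F : Type*} [Field F] {r : ℕ} (hr : 1 ≤ r)
    (q ϱ α : F) (hq : q ≠ 0) (hδ : q - q⁻¹ ≠ 0) (hϱ : ϱ ≠ 0)
    (u : Fin r → F) (hu0 : ∀ i, u i ≠ 0) (huinj : Function.Injective u)
    (hu1 : ∀ i j, u i * u j ≠ 1)
    (hα : if Odd r then α = 1 ∨ α = -1 else α = q⁻¹ ∨ α = -q)
    (hϱα : ϱ⁻¹ = α * ∏ l, u l)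
    (γ : Fin r → F)
    (hγ : ∀ i, γ i =
      ((if Odd r then 1 else -u i) +
          (q - q⁻¹)⁻¹ * ϱ * (u i ^ 2 - 1) * ∏ j ∈ Finset.univ.erase i, u j) *
        ∏ j ∈ Finset.univ.erase i, (u i * u j - 1) / (u i - u j))
    (ω : ℤ → F) (hω : ∀ a : ℤ, ω a = ∑ j, u j ^ a * γ j) :
    PowerSeries.mk (fun a : ℕ => if a = 0 then 0 else ω (-(a : ℤ))) =
      PowerSeries.X ^ 2 * (1 - PowerSeries.X ^ 2)⁻¹ +
        PowerSeries.C ((q - q⁻¹)⁻¹ * ϱ) -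
        PowerSeries.C ((∏ l, u l)⁻¹) *
          (PowerSeries.C ((q - q⁻¹)⁻¹ * ϱ * ∏ l, u l) -
            (if Odd r then PowerSeries.X * (1 - PowerSeries.X ^ 2)⁻¹
              else -(PowerSeries.X ^ 2 * (1 - PowerSeries.X ^ 2)⁻¹))) *
          ∏ l, (1 - PowerSeries.C (u l) * PowerSeries.X) *
            (1 - PowerSeries.C ((u l)⁻¹) * PowerSeries.X)⁻¹ := by
  classical
  obtain ⟨e, he⟩ : ∃ e' : F, e' = (q - q⁻¹)⁻¹ * ϱ := ⟨_, rfl⟩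
  rw [← he] at hγ ⊢
  have hP : (∏ l, u l) ≠ 0 := Finset.prod_ne_zero_iff.mpr fun i _ => hu0 i
  -- unit facts
  have hSinv : ∀ c : F, (1 - PowerSeries.C c * PowerSeries.X) *
      (1 - PowerSeries.C c * PowerSeries.X)⁻¹ = 1 := fun c =>
    PowerSeries.mul_inv_cancel _ (by simp)
  have hX2inv : ((1 : PowerSeries F) - PowerSeries.X ^ 2) *
      ((1 : PowerSeries F) - PowerSeries.X ^ 2)⁻¹ = 1 :=
    PowerSeries.mul_inv_cancel _ (by simp)
  set U : PowerSeries F := (1 - PowerSeries.X ^ 2) *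
      ∏ l, (1 - PowerSeries.C ((u l)⁻¹) * PowerSeries.X) with hUdef
  have hUne : U ≠ 0 := by
    intro h
    have h2 := congrArg (PowerSeries.constantCoeff) h
    simp [hUdef] at h2
  -- rewrite the left side
  have hmk : PowerSeries.mk (fun a : ℕ => if a = 0 then 0 else ω (-(a : ℤ))) =
      (∑ j, PowerSeries.C (γ j) * PowerSeries.mk fun n => ((u j)⁻¹) ^ n) -
        PowerSeries.C (∑ j, γ j) := by
    ext a
    rw [PowerSeries.coeff_mk, map_sub, map_sum]
    simp only [PowerSeries.coeff_C_mul, PowerSeries.coeff_mk, PowerSeries.coeff_C]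
    by_cases ha : a = 0
    · subst ha; simp
    · rw [if_neg ha, if_neg ha, sub_zero, hω]
      refine Finset.sum_congr rfl fun j _ => ?_
      rw [zpow_neg, zpow_natCast, inv_pow]
      ring
  have hterm : ∀ j, (PowerSeries.mk fun n => ((u j)⁻¹) ^ n) *
      ∏ l, (1 - PowerSeries.C ((u l)⁻¹) * PowerSeries.X) =
      ∏ l ∈ Finset.univ.erase j, (1 - PowerSeries.C ((u l)⁻¹) * PowerSeries.X) := by
    intro j
    rw [← Finset.mul_prod_erase _ _ (Finset.mem_univ j), ← mul_assoc, aux_geom, one_mul]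
  have hsum : (∑ j, PowerSeries.C (γ j) * PowerSeries.mk fun n => ((u j)⁻¹) ^ n) *
      ∏ l, (1 - PowerSeries.C ((u l)⁻¹) * PowerSeries.X) =
      ∑ j, PowerSeries.C (γ j) *
        ∏ l ∈ Finset.univ.erase j, (1 - PowerSeries.C ((u l)⁻¹) * PowerSeries.X) := by
    rw [Finset.sum_mul]
    exact Finset.sum_congr rfl fun j _ => by rw [mul_assoc, hterm j]
  -- relations for the right side
  have h3 : (∏ l, ((1 - PowerSeries.C (u l) * PowerSeries.X) *
        (1 - PowerSeries.C ((u l)⁻¹) * PowerSeries.X)⁻¹)) *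
      (∏ l, (1 - PowerSeries.C ((u l)⁻¹) * PowerSeries.X)) =
      ∏ l, (1 - PowerSeries.C (u l) * PowerSeries.X) := by
    rw [← Finset.prod_mul_distrib]
    refine Finset.prod_congr rfl fun l _ => ?_
    rw [mul_assoc, mul_comm ((1 - PowerSeries.C ((u l)⁻¹) * PowerSeries.X)⁻¹), hSinv, mul_one]
  have h4 : PowerSeries.C (∏ l, u l)⁻¹ *
      ∏ l, (1 - PowerSeries.C (u l) * PowerSeries.X) =
      ∏ l, (PowerSeries.C ((u l)⁻¹) - PowerSeries.X) := by
    rw [← Finset.prod_inv_distrib, map_prod, ← Finset.prod_mul_distrib]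
    refine Finset.prod_congr rfl fun l _ => ?_
    rw [mul_sub, mul_one, ← mul_assoc, ← map_mul, inv_mul_cancel₀ (hu0 l), map_one, one_mul]
  have hCP : PowerSeries.C (∏ l, u l)⁻¹ * PowerSeries.C (∏ l, u l) = 1 := by
    rw [← map_mul, inv_mul_cancel₀ hP, map_one]
  -- the mapped polynomial identity
  have hC : ∀ a : F, Polynomial.coeToPowerSeries.ringHom (Polynomial.C a) =
      PowerSeries.C a := fun a => by
    simp [Polynomial.coeToPowerSeries.ringHom_apply]
  have hX : Polynomial.coeToPowerSeries.ringHom (Polynomial.X : Polynomial F) =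
      PowerSeries.X := by
    simp [Polynomial.coeToPowerSeries.ringHom_apply]
  have hmap := congrArg (Polynomial.coeToPowerSeries.ringHom (R := F))
    (aux_key e u hu0 huinj hu1 γ hγ)
  simp only [apply_ite (⇑(Polynomial.coeToPowerSeries.ringHom (R := F))), map_mul, map_sub,
    map_add, map_sum, map_prod, map_pow, map_one, map_neg, hC, hX] at hmap
  -- finish
  rw [show PowerSeries.C (e * ∏ l, u l) = PowerSeries.C e * PowerSeries.C (∏ l, u l)
    from map_mul _ _ _]
  refine mul_right_cancel₀ hUne ?_
  rw [hmk, hUdef]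
  rcases Nat.even_or_odd r with hre | hro
  · rw [if_neg (Nat.not_odd_iff_even.mpr hre)] at hmap ⊢
    calc ((∑ j, PowerSeries.C (γ j) * PowerSeries.mk fun n => ((u j)⁻¹) ^ n) -
          PowerSeries.C (∑ j, γ j)) *
        ((1 - PowerSeries.X ^ 2) * ∏ l, (1 - PowerSeries.C ((u l)⁻¹) * PowerSeries.X))
        = (1 - PowerSeries.X ^ 2) *
          ((∑ j, PowerSeries.C (γ j) *
            ∏ l ∈ Finset.univ.erase j, (1 - PowerSeries.C ((u l)⁻¹) * PowerSeries.X)) -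
          PowerSeries.C (∑ j, γ j) *
            ∏ l, (1 - PowerSeries.C ((u l)⁻¹) * PowerSeries.X)) := by
          linear_combination (1 - PowerSeries.X ^ 2 : PowerSeries F) * hsum
      _ = _ := by
          rw [map_sum (PowerSeries.C) γ Finset.univ, hmap]
          linear_combination
            -(PowerSeries.X ^ 2 * (∏ l, (1 - PowerSeries.C ((u l)⁻¹) * PowerSeries.X)) -
              PowerSeries.X ^ 2 * PowerSeries.C (∏ l, u l)⁻¹ *
                (∏ l, ((1 - PowerSeries.C (u l) * PowerSeries.X) *
                  (1 - PowerSeries.C ((u l)⁻¹) * PowerSeries.X)⁻¹)) *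
                (∏ l, (1 - PowerSeries.C ((u l)⁻¹) * PowerSeries.X))) * hX2inv
            - (-(PowerSeries.C e) * (1 - PowerSeries.X ^ 2) -
                PowerSeries.X ^ 2 * PowerSeries.C (∏ l, u l)⁻¹) * h3
            - (-(PowerSeries.X ^ 2)) * h4
            - (-(PowerSeries.C e) * (1 - PowerSeries.X ^ 2) *
                (∏ l, ((1 - PowerSeries.C (u l) * PowerSeries.X) *
                  (1 - PowerSeries.C ((u l)⁻¹) * PowerSeries.X)⁻¹)) *
                (∏ l, (1 - PowerSeries.C ((u l)⁻¹) * PowerSeries.X))) * hCP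
  · rw [if_pos hro] at hmap ⊢
    calc ((∑ j, PowerSeries.C (γ j) * PowerSeries.mk fun n => ((u j)⁻¹) ^ n) -
          PowerSeries.C (∑ j, γ j)) *
        ((1 - PowerSeries.X ^ 2) * ∏ l, (1 - PowerSeries.C ((u l)⁻¹) * PowerSeries.X))
        = (1 - PowerSeries.X ^ 2) *
          ((∑ j, PowerSeries.C (γ j) *
            ∏ l ∈ Finset.univ.erase j, (1 - PowerSeries.C ((u l)⁻¹) * PowerSeries.X)) -
          PowerSeries.C (∑ j, γ j) *
            ∏ l, (1 - PowerSeries.C ((u l)⁻¹) * PowerSeries.X)) := by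
          linear_combination (1 - PowerSeries.X ^ 2 : PowerSeries F) * hsum
      _ = _ := by
          rw [map_sum (PowerSeries.C) γ Finset.univ, hmap]
          linear_combination
            -(PowerSeries.X ^ 2 * (∏ l, (1 - PowerSeries.C ((u l)⁻¹) * PowerSeries.X)) +
              PowerSeries.X * PowerSeries.C (∏ l, u l)⁻¹ *
                (∏ l, ((1 - PowerSeries.C (u l) * PowerSeries.X) *
                  (1 - PowerSeries.C ((u l)⁻¹) * PowerSeries.X)⁻¹)) *
                (∏ l, (1 - PowerSeries.C ((u l)⁻¹) * PowerSeries.X))) * hX2inv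
            - (-(PowerSeries.C e) * (1 - PowerSeries.X ^ 2) +
                PowerSeries.X * PowerSeries.C (∏ l, u l)⁻¹) * h3
            - PowerSeries.X * h4
            - (-(PowerSeries.C e) * (1 - PowerSeries.X ^ 2) *
                (∏ l, ((1 - PowerSeries.C (u l) * PowerSeries.X) *
                  (1 - PowerSeries.C ((u l)⁻¹) * PowerSeries.X)⁻¹)) *
                (∏ l, (1 - PowerSeries.C ((u l)⁻¹) * PowerSeries.X))) * hCP
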